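/- arXiv:1310.5498 — 3 statements merged into one kernel-verified Lean document; each statement's English description precedes it below -/
import Mathlib

section
/- Let μ₁ and μ₂ be probability measures on a measurable space (E, ℰ) with μ₂ absolutely continuous with respect to μ₁, and suppose that for some p > 1 and C > 1 one has ∫_E (dμ₂/dμ₁)^{p+1} dμ₁ ≤ C, where dμ₂/dμ₁ denotes the Radon–Nikodym derivative. Then (μ₁ ⊓ μ₂)(E) ≥ (1 − 1/p)·(1/(pC))^{1/(p−1)}. -/
open MeasureTheory

/-- If `μ₁, μ₂` are probability measures with `μ₂ ≪ μ₁` and the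
Radon–Nikodym derivative satisfies `∫ (dμ₂/dμ₁)^(p+1) dμ₁ ≤ C` for some `p > 1`, `C > 1`,
then the total mass of the infimum measure satisfies
`(μ₁ ⊓ μ₂)(E) ≥ (1 - 1/p) (1/(pC))^(1/(p-1))`. -/
theorem overlap_lower_bound_of_moment {E : Type*} [MeasurableSpace E]
    (μ₁ μ₂ : Measure E) [IsProbabilityMeasure μ₁] [IsProbabilityMeasure μ₂]
    (hac : μ₂ ≪ μ₁) (p C : ℝ) (hp : 1 < p) (hC : 1 < C)
    (hmom : ∫⁻ x, (μ₂.rnDeriv μ₁ x) ^ (p + 1) ∂μ₁ ≤ ENNReal.ofReal C) :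
    ENNReal.ofReal ((1 - 1 / p) * (1 / (p * C)) ^ (1 / (p - 1))) ≤ (μ₁ ⊓ μ₂) Set.univ := by
  set f := μ₂.rnDeriv μ₁ with hf
  have hfm : Measurable f := Measure.measurable_rnDeriv μ₂ μ₁
  have hp0 : (0:ℝ) < p := by linarith
  have hpC1 : (1:ℝ) ≤ p * C := by nlinarith
  have hpC0 : (0:ℝ) < p * C := by linarith
  -- real threshold
  set m : ℝ := (p * C) ^ (1 / (p - 1)) with hm
  have hm1 : (1:ℝ) ≤ m := Real.one_le_rpow hpC1 (le_of_lt (div_pos one_pos (by linarith)))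
  have hm0 : (0:ℝ) < m := by linarith
  set M : ENNReal := ENNReal.ofReal m with hM
  have hM1 : (1:ENNReal) ≤ M := by
    rw [hM, ← ENNReal.ofReal_one]; exact ENNReal.ofReal_le_ofReal hm1
  have hM0 : M ≠ 0 := by
    simp [hM, ENNReal.ofReal_eq_zero]; linarith
  have hMtop : M ≠ ⊤ := ENNReal.ofReal_ne_top
  -- Step 1: the infimum measure dominates `withDensity μ₁ (min 1 f)`
  have hwd : μ₁.withDensity (fun x => min 1 (f x)) ≤ μ₁ ⊓ μ₂ := by
    refine le_inf ?_ ?_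
    · calc μ₁.withDensity (fun x => min 1 (f x)) ≤ μ₁.withDensity 1 :=
            withDensity_mono (Filter.Eventually.of_forall fun x => min_le_left _ _)
        _ = μ₁ := withDensity_one
    · calc μ₁.withDensity (fun x => min 1 (f x)) ≤ μ₁.withDensity f :=
            withDensity_mono (Filter.Eventually.of_forall fun x => min_le_right _ _)
        _ = μ₂ := Measure.withDensity_rnDeriv_eq μ₂ μ₁ hac
  have hwd' : ∫⁻ x, min 1 (f x) ∂μ₁ ≤ (μ₁ ⊓ μ₂) Set.univ := by
    have := hwd Set.univ
    rwa [withDensity_apply _ MeasurableSet.univ, Measure.restrict_univ] at this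
  set I : ENNReal := ∫⁻ x, min 1 (f x) ∂μ₁ with hI
  -- Step 2: pointwise bound `f ≤ M * min 1 f + f ^ (p+1) / M ^ p`
  have hpt : ∀ x, f x ≤ M * min 1 (f x) + (f x) ^ (p + 1) / M ^ p := by
    intro x
    rcases le_or_gt (f x) M with h | h
    · rcases le_or_gt (f x) 1 with h1 | h1
      · calc f x = 1 * f x := (one_mul _).symm
          _ ≤ M * min 1 (f x) := by
              rw [min_eq_right h1]; exact mul_le_mul_left hM1 _
          _ ≤ _ := le_self_add
      · calc f x ≤ M := h
          _ = M * min 1 (f x) := by rw [min_eq_left h1.le, mul_one]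
          _ ≤ _ := le_self_add
    · refine le_add_of_nonneg_of_le zero_le ?_
      have hfx0 : f x ≠ 0 := by
        intro h0; rw [h0] at h; exact (not_lt.2 (zero_le : (0:ENNReal) ≤ M)) h
      rcases eq_or_ne (f x) ⊤ with htop | htop
      · rw [htop, ENNReal.top_rpow_of_pos (by linarith),
          ENNReal.top_div_of_ne_top (ENNReal.rpow_ne_top_of_nonneg hp0.le hMtop)]
      · rw [ENNReal.le_div_iff_mul_le (Or.inl ?_) (Or.inl ?_)]
        · calc f x * M ^ p ≤ f x * (f x) ^ p := by
                refine mul_le_mul_right (ENNReal.rpow_le_rpow h.le hp0.le) _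
            _ = (f x) ^ (p + 1) := by
                rw [ENNReal.rpow_add _ _ hfx0 htop, ENNReal.rpow_one, mul_comm]
        · simp [ENNReal.rpow_eq_zero_iff, hM0, hMtop]
        · exact ENNReal.rpow_ne_top_of_nonneg hp0.le hMtop
  -- Step 3: integrate
  have hint : (1:ENNReal) ≤ M * I + ENNReal.ofReal C / M ^ p := by
    have h1 : (1:ENNReal) = ∫⁻ x, f x ∂μ₁ := by
      rw [hf, Measure.lintegral_rnDeriv hac]
      exact (measure_univ).symm
    rw [h1]
    calc ∫⁻ x, f x ∂μ₁ ≤ ∫⁻ x, (M * min 1 (f x) + (f x) ^ (p + 1) / M ^ p) ∂μ₁ :=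
          lintegral_mono hpt
      _ = M * I + (∫⁻ x, (f x) ^ (p + 1) ∂μ₁) / M ^ p := by
          rw [lintegral_add_left (by measurability), lintegral_const_mul _ (by measurability)]
          congr 1
          simp_rw [div_eq_mul_inv]
          rw [lintegral_mul_const _ (by measurability)]
      _ ≤ M * I + ENNReal.ofReal C / M ^ p := by
          gcongr
  -- Step 4: `C / m ^ p ≤ 1 / p`
  have hMp : M ^ p = ENNReal.ofReal (m ^ p) := ENNReal.ofReal_rpow_of_pos hm0
  have hmp : p * C ≤ m ^ p := by
    have : m ^ p = (p * C) ^ ((1 / (p - 1)) * p) := by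
      rw [hm, ← Real.rpow_mul hpC0.le]
    rw [this]
    nth_rewrite 1 [← Real.rpow_one (p * C)]
    apply Real.rpow_le_rpow_of_exponent_le hpC1
    rw [div_mul_eq_mul_div, one_mul, le_div_iff₀ (by linarith)]
    linarith
  have hCd : ENNReal.ofReal C / M ^ p ≤ ENNReal.ofReal (1 / p) := by
    rw [hMp, ← ENNReal.ofReal_div_of_pos (by positivity)]
    apply ENNReal.ofReal_le_ofReal
    rw [div_le_div_iff₀ (by positivity) hp0]
    nlinarith
  -- Step 5: conclude
  have hstep : ENNReal.ofReal (1 - 1 / p) ≤ M * I := by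
    have h2 : (1:ENNReal) ≤ M * I + ENNReal.ofReal (1 / p) :=
      hint.trans (add_le_add le_rfl hCd)
    have := tsub_le_iff_right.mpr h2
    calc ENNReal.ofReal (1 - 1 / p) = 1 - ENNReal.ofReal (1 / p) := by
          rw [ENNReal.ofReal_sub _ (by positivity), ENNReal.ofReal_one]
      _ ≤ M * I := this
  have hfin : ENNReal.ofReal ((1 - 1 / p) * (1 / (p * C)) ^ (1 / (p - 1))) ≤ I := by
    have hinv : (1 / (p * C)) ^ (1 / (p - 1)) = 1 / m := by
      rw [hm, Real.div_rpow zero_le_one hpC0.le, Real.one_rpow]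
    rw [hinv, mul_one_div, ENNReal.ofReal_div_of_pos hm0, ← hM]
    rw [ENNReal.div_le_iff hM0 hMtop]
    calc ENNReal.ofReal (1 - 1 / p) ≤ M * I := hstep
      _ = I * M := mul_comm _ _
  exact hfin.trans hwd'
end

section
/- Let E be a standard Borel space, let ν be a probability measure on E × E with second marginal ν₂, and let λ be a probability measure on E. Then there exists a probability measure ρ on E × E × E such that the joint law of the first and third coordinates under ρ equals ν, and the joint law of the second and third coordinates under ρ is a maximal coupling of (λ, ν₂), i.e., a coupling π of (λ, ν₂) with π({(a, b) : a ≠ b}) = 1 − (λ ⊓ ν₂)(E). -/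
open MeasureTheory ProbabilityTheory
open scoped ENNReal

section Aux

variable {E : Type*} [MeasurableSpace E] [StandardBorelSpace E]

lemma exists_max_coupling (lam μ₂ : Measure E) [IsProbabilityMeasure lam]
    [IsProbabilityMeasure μ₂] :
    ∃ π : Measure (E × E), IsProbabilityMeasure π ∧ π.map Prod.fst = lam ∧
      π.map Prod.snd = μ₂ ∧ π {q : E × E | q.1 ≠ q.2} = 1 - (lam ⊓ μ₂) Set.univ := by
  letI := upgradeStandardBorel E
  have hdiag : MeasurableSet {q : E × E | q.1 = q.2} := isClosed_diagonal.measurableSet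
  have hndiag : MeasurableSet {q : E × E | q.1 ≠ q.2} := hdiag.compl
  have hdm : Measurable (fun x : E => (x, x)) := measurable_id.prodMk measurable_id
  set μ := lam ⊓ μ₂ with hμdef
  have hμlam : μ ≤ lam := inf_le_left
  have hμ₂ : μ ≤ μ₂ := inf_le_right
  haveI : IsFiniteMeasure μ := isFiniteMeasure_of_le lam hμlam
  set m := μ Set.univ with hm
  have hm1 : m ≤ 1 := le_trans (hμlam Set.univ) (by simp)
  by_cases hcase : m = 1
  · -- in this case `lam = μ₂ = μ` and the diagonal coupling works
    have heq : ∀ ν : Measure E, IsProbabilityMeasure ν → μ ≤ ν → μ = ν := by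
      intro ν hν hle
      have h0 : (ν - μ) Set.univ = 0 := by
        rw [Measure.sub_apply MeasurableSet.univ hle, measure_univ, ← hm, hcase, tsub_self]
      have h0' : ν - μ = 0 := Measure.measure_univ_eq_zero.mp h0
      have := Measure.sub_add_cancel_of_le (μ := ν) hle
      rw [h0', zero_add] at this
      exact this
    have hlam : μ = lam := heq lam inferInstance hμlam
    have hμ₂' : μ = μ₂ := heq μ₂ inferInstance hμ₂
    refine ⟨lam.map (fun x => (x, x)), Measure.isProbabilityMeasure_map hdm.aemeasurable, ?_, ?_, ?_⟩
    · rw [Measure.map_map measurable_fst hdm]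
      simp [Function.comp_def]
    · rw [Measure.map_map measurable_snd hdm]
      simp only [Function.comp_def]
      rw [hlam] at hμ₂'
      rw [← hμ₂']
      exact Measure.map_id
    · rw [Measure.map_apply hdm hndiag]
      have : (fun x : E => (x, x)) ⁻¹' {q : E × E | q.1 ≠ q.2} = ∅ := by
        ext x; simp
      rw [this, measure_empty, hcase, tsub_self]
  · have hm_lt : m < 1 := lt_of_le_of_ne hm1 hcase
    set ξ := lam - μ with hξdef
    set η := μ₂ - μ with hηdef
    haveI : IsFiniteMeasure ξ := isFiniteMeasure_of_le lam Measure.sub_le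
    haveI : IsFiniteMeasure η := isFiniteMeasure_of_le μ₂ Measure.sub_le
    have hξ : ξ + μ = lam := Measure.sub_add_cancel_of_le hμlam
    have hη : η + μ = μ₂ := Measure.sub_add_cancel_of_le hμ₂
    set c := (1 : ℝ≥0∞) - m with hc
    have hc0 : c ≠ 0 := (tsub_pos_of_lt hm_lt).ne'
    have hctop : c ≠ ⊤ := ne_top_of_le_ne_top ENNReal.one_ne_top tsub_le_self
    have hξu : ξ Set.univ = c := by
      rw [hξdef, Measure.sub_apply MeasurableSet.univ hμlam, measure_univ]
    have hηu : η Set.univ = c := by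
      rw [hηdef, Measure.sub_apply MeasurableSet.univ hμ₂, measure_univ]
    -- ξ and η are mutually singular
    have hinf0 : ξ ⊓ η = 0 := by
      have hle : μ + (ξ ⊓ η) ≤ μ + 0 := by
        rw [add_zero]
        have h1 : μ + (ξ ⊓ η) ≤ lam := by
          calc μ + (ξ ⊓ η) ≤ μ + ξ := add_le_add le_rfl inf_le_left
          _ = lam := by rw [add_comm]; exact hξ
        have h2 : μ + (ξ ⊓ η) ≤ μ₂ := by
          calc μ + (ξ ⊓ η) ≤ μ + η := add_le_add le_rfl inf_le_right
          _ = μ₂ := by rw [add_comm]; exact hη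
        exact le_inf h1 h2
      exact Measure.nonpos_iff_eq_zero'.mp (Measure.le_of_add_le_add_left hle)
    have hsing : ξ ⟂ₘ η := by
      refine Measure.mutuallySingular_of_disjoint ?_
      intro χ h1 h2
      have : χ ≤ ξ ⊓ η := le_inf h1 h2
      rw [hinf0] at this
      exact this.trans (le_of_eq rfl)
    obtain ⟨t, htm, ht1, ht2⟩ := hsing
    -- the product of ξ and η gives no mass to the diagonal
    have hd0 : (ξ.prod η) {q : E × E | q.1 = q.2} = 0 := by
      have hsub : {q : E × E | q.1 = q.2} ⊆ (t ×ˢ Set.univ) ∪ (Set.univ ×ˢ tᶜ) := by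
        rintro ⟨a, b⟩ hab
        simp only [Set.mem_setOf_eq] at hab
        subst hab
        by_cases hat : a ∈ t
        · exact Or.inl (by simp [hat])
        · exact Or.inr (by simp [hat])
      refine measure_mono_null hsub (measure_union_null ?_ ?_)
      · rw [Measure.prod_prod, ht1, zero_mul]
      · rw [Measure.prod_prod, ht2, mul_zero]
    have hprod_univ : (ξ.prod η) Set.univ = c * c := by
      rw [← Set.univ_prod_univ, Measure.prod_prod, hξu, hηu]
    have hprod_ne : (ξ.prod η) {q : E × E | q.1 ≠ q.2} = c * c := by
      have hcompl : {q : E × E | q.1 ≠ q.2} = {q : E × E | q.1 = q.2}ᶜ := rfl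
      rw [hcompl, measure_compl hdiag (measure_ne_top _ _), hd0, tsub_zero, hprod_univ]
    refine ⟨μ.map (fun x => (x, x)) + c⁻¹ • (ξ.prod η), ?_, ?_, ?_, ?_⟩
    · constructor
      rw [Measure.add_apply, Measure.smul_apply, smul_eq_mul, hprod_univ,
        Measure.map_apply hdm MeasurableSet.univ, Set.preimage_univ, ← hm,
        ← mul_assoc, ENNReal.inv_mul_cancel hc0 hctop, one_mul, hc]
      exact add_tsub_cancel_of_le hm1
    · rw [Measure.map_add _ _ measurable_fst, Measure.map_smul,
        Measure.map_map measurable_fst hdm, Measure.map_fst_prod, hηu]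
      simp only [Function.comp_def]
      rw [smul_smul, ENNReal.inv_mul_cancel hc0 hctop, one_smul]
      have : (lam ⊓ μ₂).map (fun x => x) = μ := by rw [← hμdef]; exact Measure.map_id
      rw [← hμdef] at *
      rw [this, add_comm]
      exact hξ
    · rw [Measure.map_add _ _ measurable_snd, Measure.map_smul,
        Measure.map_map measurable_snd hdm, Measure.map_snd_prod, hξu]
      simp only [Function.comp_def]
      rw [smul_smul, ENNReal.inv_mul_cancel hc0 hctop, one_smul]
      have : (lam ⊓ μ₂).map (fun x => x) = μ := by rw [← hμdef]; exact Measure.map_id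
      rw [← hμdef] at *
      rw [this, add_comm]
      exact hη
    · rw [Measure.add_apply, Measure.smul_apply, smul_eq_mul, hprod_ne,
        Measure.map_apply hdm hndiag]
      have hpre : (fun x : E => (x, x)) ⁻¹' {q : E × E | q.1 ≠ q.2} = ∅ := by
        ext x; simp
      rw [hpre, measure_empty, zero_add, ← mul_assoc,
        ENNReal.inv_mul_cancel hc0 hctop, one_mul, hc]

end Aux

/-- Given a probability measure `ν` on `E × E` (with second marginal `ν₂`)
and a probability measure `lam` on `E`, over a standard Borel space `E`, there is a
probability measure `ρ` on `E × E × E` whose (first, third)-marginal is `ν` and whose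
(second, third)-marginal is a maximal coupling of `(lam, ν₂)`. -/
theorem coupling_extension {E : Type*} [MeasurableSpace E] [StandardBorelSpace E]
    (ν : Measure (E × E)) [IsProbabilityMeasure ν]
    (lam : Measure E) [IsProbabilityMeasure lam] :
    ∃ ρ : Measure (E × E × E), IsProbabilityMeasure ρ ∧
      ρ.map (fun p => (p.1, p.2.2)) = ν ∧
      (ρ.map (fun p => (p.2.1, p.2.2))).map Prod.fst = lam ∧
      (ρ.map (fun p => (p.2.1, p.2.2))).map Prod.snd = ν.map Prod.snd ∧
      (ρ.map (fun p => (p.2.1, p.2.2))) {q : E × E | q.1 ≠ q.2}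
        = 1 - (lam ⊓ ν.map Prod.snd) Set.univ := by
  haveI : Nonempty (E × E) := Measure.nonempty_of_neZero ν
  haveI : Nonempty E := ⟨(Classical.arbitrary (E × E)).1⟩
  haveI hν₂ : IsProbabilityMeasure (ν.map Prod.snd) :=
    Measure.isProbabilityMeasure_map measurable_snd.aemeasurable
  obtain ⟨π, hπp, hπ1, hπ2, hπd⟩ := exists_max_coupling lam (ν.map Prod.snd)
  set ν' := ν.map Prod.swap with hν'
  haveI : IsProbabilityMeasure ν' := Measure.isProbabilityMeasure_map measurable_swap.aemeasurable
  set K := ν'.condKernel with hK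
  set σ := π.map Prod.swap with hσ
  haveI : IsProbabilityMeasure σ := Measure.isProbabilityMeasure_map measurable_swap.aemeasurable
  have hσfst : σ.map Prod.fst = ν'.fst := by
    rw [hσ, Measure.map_map measurable_fst measurable_swap]
    have : (Prod.fst ∘ Prod.swap : E × E → E) = Prod.snd := rfl
    rw [this, hπ2]
    rw [Measure.fst, hν', Measure.map_map measurable_fst measurable_swap]
    rfl
  set κ := K.comap Prod.fst measurable_fst with hκ
  set τ := σ ⊗ₘ κ with hτ
  set ρ := τ.map (fun q : (E × E) × E => (q.2, q.1.2, q.1.1)) with hρ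
  have hg : Measurable (fun q : (E × E) × E => (q.2, q.1.2, q.1.1)) :=
    measurable_snd.prodMk (measurable_fst.snd.prodMk measurable_fst.fst)
  haveI : IsProbabilityMeasure τ := by rw [hτ]; infer_instance
  haveI hρp : IsProbabilityMeasure ρ := Measure.isProbabilityMeasure_map hg.aemeasurable
  -- the (first, third)-marginal of ρ is ν
  have h13 : ρ.map (fun p : E × E × E => (p.1, p.2.2)) = ν := by
    rw [hρ, Measure.map_map (measurable_fst.prodMk measurable_snd.snd) hg]
    have hcomp : ((fun p : E × E × E => (p.1, p.2.2)) ∘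
        (fun q : (E × E) × E => (q.2, q.1.2, q.1.1))) = fun q => (q.2, q.1.1) := rfl
    rw [hcomp]
    ext s hs
    rw [Measure.map_apply (measurable_snd.prodMk measurable_fst.fst) hs, hτ,
      Measure.compProd_apply (hs.preimage (measurable_snd.prodMk measurable_fst.fst))]
    have hint : ∀ p : E × E, κ p (Prod.mk p ⁻¹' ((fun q : (E × E) × E => (q.2, q.1.1)) ⁻¹' s))
        = K p.1 (Prod.mk p.1 ⁻¹' (Prod.swap ⁻¹' s)) := by
      intro p
      rw [hκ, Kernel.comap_apply]
      congr 1
    simp_rw [hint]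
    have hmeas : Measurable (fun c : E => K c (Prod.mk c ⁻¹' (Prod.swap ⁻¹' s))) :=
      Kernel.measurable_kernel_prodMk_left (hs.preimage measurable_swap)
    rw [show ∫⁻ p : E × E, K p.1 (Prod.mk p.1 ⁻¹' (Prod.swap ⁻¹' s)) ∂σ
        = ∫⁻ c, K c (Prod.mk c ⁻¹' (Prod.swap ⁻¹' s)) ∂(σ.map Prod.fst) from
      (lintegral_map hmeas (measurable_fst : Measurable (Prod.fst : E × E → E))).symm ▸ rfl, hσfst]
    rw [← Measure.compProd_apply (hs.preimage measurable_swap), hK, ν'.disintegrate ν'.condKernel,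
      hν', Measure.map_apply measurable_swap (hs.preimage measurable_swap),
      ← Set.preimage_comp]
    simp
  -- the (second, third)-marginal of ρ is π
  have h23 : ρ.map (fun p : E × E × E => (p.2.1, p.2.2)) = π := by
    rw [hρ, Measure.map_map (measurable_snd.fst.prodMk measurable_snd.snd) hg]
    have hcomp : ((fun p : E × E × E => (p.2.1, p.2.2)) ∘
        (fun q : (E × E) × E => (q.2, q.1.2, q.1.1))) = Prod.swap ∘ Prod.fst := rfl
    rw [hcomp, ← Measure.map_map measurable_swap measurable_fst]
    have hfst : τ.map Prod.fst = σ := by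
      rw [hτ]
      exact Measure.fst_compProd σ κ
    rw [hfst, hσ, Measure.map_map measurable_swap measurable_swap]
    simp [Function.comp_def]
  exact ⟨ρ, hρp, h13, by rw [h23]; exact hπ1, by rw [h23]; exact hπ2, by rw [h23]; exact hπd⟩
end

section
/- Let (Ω, ℱ, P) be a probability space with a filtration (ℱ_k)_{k ∈ ℕ}, and let (ξ_k)_{k ∈ ℕ} be a sequence of nonnegative integrable random variables such that ξ_k is ℱ_k-measurable for every k and E[ξ_{k+1} | ℱ_k] ≤ γ·ξ_k + κ almost surely for every k, where γ ≥ 0 and κ ≥ 0. Fix R > 0, set C_k = {ξ_k ≥ R} and B_k = ∩_{j=0}^{k} C_j, and let λ = γ + κ/R. Then for every k ≥ 1: E[ξ_k·1_{B_k}] ≤ λ^{k−1}·(γ·E[ξ_0] + κ) and P(B_k) ≤ λ^{k−1}·(γ·E[ξ_0] + κ)/R. -/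
open MeasureTheory

/-- Let `(ξ_k)` be nonnegative integrable random variables adapted to a
filtration `(ℱ_k)` with `E[ξ_{k+1} | ℱ_k] ≤ γ ξ_k + κ` a.s. For `R > 0`, letting
`B_k = ∩_{j ≤ k} {ξ_j ≥ R}` and `λ = γ + κ/R`, one has for every `k ≥ 1`:
`E[ξ_k 1_{B_k}] ≤ λ^{k-1} (γ E[ξ_0] + κ)` and `P(B_k) ≤ λ^{k-1} (γ E[ξ_0] + κ)/R`. -/
theorem return_time_iteration {Ω : Type*} {m0 : MeasurableSpace Ω}
    (μ : Measure Ω) [IsProbabilityMeasure μ]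
    (ℱ : Filtration ℕ m0)
    (ξ : ℕ → Ω → ℝ)
    (hadapted : ∀ k, StronglyMeasurable[ℱ k] (ξ k))
    (hint : ∀ k, Integrable (ξ k) μ)
    (hnonneg : ∀ k ω, 0 ≤ ξ k ω)
    (γ κ : ℝ) (hγ : 0 ≤ γ) (hκ : 0 ≤ κ)
    (hrec : ∀ k, ∀ᵐ ω ∂μ, (μ[ξ (k + 1) | ℱ k]) ω ≤ γ * ξ k ω + κ)
    (R : ℝ) (hR : 0 < R) :
    ∀ k : ℕ, 1 ≤ k →
      (∫ ω, Set.indicator {ω | ∀ j ≤ k, R ≤ ξ j ω} (ξ k) ω ∂μ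
          ≤ (γ + κ / R) ^ (k - 1) * (γ * (∫ ω, ξ 0 ω ∂μ) + κ)) ∧
      μ {ω | ∀ j ≤ k, R ≤ ξ j ω}
          ≤ ENNReal.ofReal ((γ + κ / R) ^ (k - 1) * (γ * (∫ ω, ξ 0 ω ∂μ) + κ) / R) := by
  set B : ℕ → Set Ω := fun k => {ω | ∀ j ≤ k, R ≤ ξ j ω} with hBdef
  set L : ℝ := γ + κ / R with hLdef
  set C : ℝ := γ * (∫ ω, ξ 0 ω ∂μ) + κ with hCdef
  have hLnn : 0 ≤ L := by positivity
  have hCnn : 0 ≤ C := by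
    have : 0 ≤ ∫ ω, ξ 0 ω ∂μ := integral_nonneg (hnonneg 0)
    positivity
  have hBmeas : ∀ k, MeasurableSet[ℱ k] (B k) := by
    intro k
    have hEq : B k = ⋂ j ∈ Finset.range (k + 1), {ω | R ≤ ξ j ω} := by
      ext ω
      simp [hBdef, Nat.lt_succ_iff]
    rw [hEq]
    refine MeasurableSet.biInter (Set.to_countable _) fun j hj => ?_
    have hj' : j ≤ k := Nat.lt_succ_iff.mp (Finset.mem_range.mp hj)
    exact measurableSet_le measurable_const
      ((hadapted j).measurable.mono (ℱ.mono hj') le_rfl)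
  have hBm0 : ∀ k, MeasurableSet (B k) := fun k => ℱ.le k _ (hBmeas k)
  have hmono : ∀ k, B (k + 1) ⊆ B k := fun k ω h j hj => h j (Nat.le_succ_of_le hj)
  have hInn : ∀ k, 0 ≤ ∫ ω in B k, ξ k ω ∂μ := fun k =>
    setIntegral_nonneg (hBm0 k) (fun ω _ => hnonneg k ω)
  -- lower bound on the integral by R * μ(B k)
  have hmeasI : ∀ k, R * (μ (B k)).toReal ≤ ∫ ω in B k, ξ k ω ∂μ := by
    intro k
    have h1 : ∫ ω in B k, R ∂μ ≤ ∫ ω in B k, ξ k ω ∂μ :=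
      setIntegral_mono_on (integrableOn_const (measure_ne_top μ _))
        (hint k).integrableOn (hBm0 k) (fun ω hω => hω k le_rfl)
    rwa [setIntegral_const, smul_eq_mul, mul_comm] at h1
  -- key recursion step
  have step : ∀ k, ∫ ω in B (k + 1), ξ (k + 1) ω ∂μ
      ≤ γ * (∫ ω in B k, ξ k ω ∂μ) + κ * (μ (B k)).toReal := by
    intro k
    have h1 : ∫ ω in B (k + 1), ξ (k + 1) ω ∂μ ≤ ∫ ω in B k, ξ (k + 1) ω ∂μ :=
      setIntegral_mono_set (hint (k + 1)).integrableOn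
        (Filter.Eventually.of_forall fun ω => hnonneg _ ω)
        (Filter.Eventually.of_forall (hmono k))
    have h2 : ∫ ω in B k, ξ (k + 1) ω ∂μ = ∫ ω in B k, (μ[ξ (k + 1)|ℱ k]) ω ∂μ :=
      (setIntegral_condExp (ℱ.le k) (hint (k + 1)) (hBmeas k)).symm
    have h3 : ∫ ω in B k, (μ[ξ (k + 1)|ℱ k]) ω ∂μ ≤ ∫ ω in B k, (γ * ξ k ω + κ) ∂μ :=
      setIntegral_mono_ae integrable_condExp.integrableOn
        (((hint k).const_mul γ).add (integrable_const κ)).integrableOn (hrec k)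
    have h4 : ∫ ω in B k, (γ * ξ k ω + κ) ∂μ
        = γ * (∫ ω in B k, ξ k ω ∂μ) + κ * (μ (B k)).toReal := by
      rw [integral_add ((hint k).const_mul γ).integrableOn (integrable_const κ),
        integral_const_mul, setIntegral_const, smul_eq_mul, measureReal_def]
      ring
    linarith
  -- main integral bound by induction
  have main : ∀ n : ℕ, ∫ ω in B (n + 1), ξ (n + 1) ω ∂μ ≤ L ^ n * C := by
    intro n
    induction n with
    | zero =>
      have h0 : ∫ ω in B 0, ξ 0 ω ∂μ ≤ ∫ ω, ξ 0 ω ∂μ :=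
        setIntegral_le_integral (hint 0) (Filter.Eventually.of_forall (hnonneg 0))
    
      have hμ : (μ (B 0)).toReal ≤ 1 := by
        have := prob_le_one (μ := μ) (s := B 0)
        simpa using ENNReal.toReal_mono (by simp) this
      have hμnn : 0 ≤ (μ (B 0)).toReal := ENNReal.toReal_nonneg
      have := step 0
      simp only [pow_zero, one_mul]
      nlinarith
    | succ n ih =>
      have hs := step (n + 1)
      have hκμ : κ * (μ (B (n + 1))).toReal ≤ (κ / R) * ∫ ω in B (n + 1), ξ (n + 1) ω ∂μ := by
        have h := mul_le_mul_of_nonneg_left (hmeasI (n + 1)) (div_nonneg hκ hR.le)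
        calc κ * (μ (B (n + 1))).toReal = (κ / R) * (R * (μ (B (n + 1))).toReal) := by
              field_simp
          _ ≤ (κ / R) * ∫ ω in B (n + 1), ξ (n + 1) ω ∂μ := h
      have hL : ∫ ω in B (n + 2), ξ (n + 2) ω ∂μ ≤ L * ∫ ω in B (n + 1), ξ (n + 1) ω ∂μ := by
        rw [hLdef]; nlinarith [hInn (n + 1)]
      calc ∫ ω in B (n + 2), ξ (n + 2) ω ∂μ ≤ L * ∫ ω in B (n + 1), ξ (n + 1) ω ∂μ := hL
        _ ≤ L * (L ^ n * C) := mul_le_mul_of_nonneg_left ih hLnn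
        _ = L ^ (n + 1) * C := by ring
  intro k hk
  obtain ⟨n, rfl⟩ : ∃ n, k = n + 1 := ⟨k - 1, (Nat.succ_pred_eq_of_pos hk).symm⟩
  have hmain := main n
  have hk1 : n + 1 - 1 = n := rfl
  constructor
  · rw [integral_indicator (hBm0 (n + 1))]
    simpa using hmain
  · have hto : (μ (B (n + 1))).toReal ≤ L ^ n * C / R := by
      have := hmeasI (n + 1)
      rw [le_div_iff₀ hR]
      nlinarith
    calc μ (B (n + 1)) = ENNReal.ofReal (μ (B (n + 1))).toReal :=
          (ENNReal.ofReal_toReal (measure_ne_top μ _)).symm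
      _ ≤ ENNReal.ofReal (L ^ n * C / R) := ENNReal.ofReal_le_ofReal hto
      _ = ENNReal.ofReal ((γ + κ / R) ^ (n + 1 - 1) * (γ * (∫ ω, ξ 0 ω ∂μ) + κ) / R) := by
          rw [hk1]
end
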